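/- Let h, η : D×I → ℝ be C³ and ū : D×I → ℝ² be C² on an open set D ⊆ ℝ² times an interval I, with H := h + η > 0 and material derivative D̄(·) := (·)_t + ū·∇(·) (D̄² = D̄∘D̄). Define the Boussinesq-type pressure terms 𝒫 := ρgH²/2 − ρH·[(h/3)·D̄(h·div ū) + (h/2)·D̄²h] and p̌ := ρgH − ρH·[(1/2)·D̄(h·div ū) + D̄²h], and assume (H, ū) satisfies the mass equation H_t + div(H ū) = 0 and the momentum equation ū_t + (ū·∇)ū + ∇𝒫/(ρH) = p̌ ∇h/(ρH). Define the total energy density ℰ by ℰ/ρ := |ū|²/2 + (h²/6)(div ū)² + (h/2)(div ū)·D̄h + (D̄h)²/2 + g(H − 2h)/2. Then the total energy balance holds at every point: (Hℰ)_t + div((Hℰ + 𝒫)ū) = −p̌·h_t. In particular, over a steady bottom (h_t ≡ 0) this is a local conservation law. -/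

import Mathlib

noncomputable section

/-- Horizontal space-time points `((x₁,x₂), t)`. -/
abbrev Qt : Type := (ℝ × ℝ) × ℝ

/-- Partial derivative `∂_{x₁}`. -/
noncomputable def pX1 (f : Qt → ℝ) (q : Qt) : ℝ :=
  fderiv ℝ f q (((1 : ℝ), (0 : ℝ)), (0 : ℝ))

/-- Partial derivative `∂_{x₂}`. -/
noncomputable def pX2 (f : Qt → ℝ) (q : Qt) : ℝ :=
  fderiv ℝ f q (((0 : ℝ), (1 : ℝ)), (0 : ℝ))

/-- Partial derivative `∂_t`. -/
noncomputable def pT (f : Qt → ℝ) (q : Qt) : ℝ :=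
  fderiv ℝ f q (((0 : ℝ), (0 : ℝ)), (1 : ℝ))

/-- Horizontal divergence of a plane vector field. -/
noncomputable def divV (w : Qt → ℝ × ℝ) (q : Qt) : ℝ :=
  pX1 (fun z => (w z).1) q + pX2 (fun z => (w z).2) q

/-- Material derivative `D̄f := f_t + ū·∇f`. -/
noncomputable def matD (u : Qt → ℝ × ℝ) (f : Qt → ℝ) (q : Qt) : ℝ :=
  pT f q + (u q).1 * pX1 f q + (u q).2 * pX2 f q

/-- Boussinesq depth-integrated pressure
`𝒫 := ρgH²/2 − ρH[(h/3) D̄(h div ū) + (h/2) D̄²h]`, with `H = h + η`. -/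
noncomputable def bousP (ρ g : ℝ) (h η : Qt → ℝ) (u : Qt → ℝ × ℝ) (q : Qt) : ℝ :=
  ρ * g * (h q + η q) ^ 2 / 2
    - ρ * (h q + η q) *
        (h q / 3 * matD u (fun z => h z * divV u z) q
          + h q / 2 * matD u (fun z => matD u h z) q)

/-- Boussinesq bottom pressure
`p̌ := ρgH − ρH[(1/2) D̄(h div ū) + D̄²h]`, with `H = h + η`. -/
noncomputable def bousPc (ρ g : ℝ) (h η : Qt → ℝ) (u : Qt → ℝ × ℝ) (q : Qt) : ℝ :=
  ρ * g * (h q + η q)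
    - ρ * (h q + η q) *
        ((1 / 2) * matD u (fun z => h z * divV u z) q
          + matD u (fun z => matD u h z) q)

/-- Boussinesq total energy density
`ℰ := ρ(|ū|²/2 + h²(div ū)²/6 + (h/2)(div ū) D̄h + (D̄h)²/2 + g(H−2h)/2)`. -/
noncomputable def bousE (ρ g : ℝ) (h η : Qt → ℝ) (u : Qt → ℝ × ℝ) (q : Qt) : ℝ :=
  ρ * (((u q).1 ^ 2 + (u q).2 ^ 2) / 2
    + (h q) ^ 2 / 6 * (divV u q) ^ 2
    + h q / 2 * (divV u q) * matD u h q
    + (matD u h q) ^ 2 / 2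
    + g * ((h q + η q) - 2 * h q) / 2)

def v1 : Qt := (((1 : ℝ), (0 : ℝ)), (0 : ℝ))
def v2 : Qt := (((0 : ℝ), (1 : ℝ)), (0 : ℝ))
def vt : Qt := (((0 : ℝ), (0 : ℝ)), (1 : ℝ))

noncomputable def pd (v : Qt) (f : Qt → ℝ) (q : Qt) : ℝ := fderiv ℝ f q v

theorem pT_eq (f : Qt → ℝ) (q : Qt) : pT f q = pd vt f q := rfl
theorem pX1_eq (f : Qt → ℝ) (q : Qt) : pX1 f q = pd v1 f q := rfl
theorem pX2_eq (f : Qt → ℝ) (q : Qt) : pX2 f q = pd v2 f q := rfl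

theorem pd_add (v : Qt) {f g : Qt → ℝ} {q : Qt} (hf : DifferentiableAt ℝ f q)
    (hg : DifferentiableAt ℝ g q) :
    pd v (fun z => f z + g z) q = pd v f q + pd v g q := by
  simp [pd, fderiv_fun_add hf hg]

theorem pd_sub (v : Qt) {f g : Qt → ℝ} {q : Qt} (hf : DifferentiableAt ℝ f q)
    (hg : DifferentiableAt ℝ g q) :
    pd v (fun z => f z - g z) q = pd v f q - pd v g q := by
  simp [pd, fderiv_fun_sub hf hg]

theorem pd_mul (v : Qt) {f g : Qt → ℝ} {q : Qt} (hf : DifferentiableAt ℝ f q)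
    (hg : DifferentiableAt ℝ g q) :
    pd v (fun z => f z * g z) q = pd v f q * g q + f q * pd v g q := by
  simp [pd, fderiv_fun_mul hf hg]; ring

theorem pd_const (v : Qt) (c : ℝ) (q : Qt) : pd v (fun _ => c) q = 0 := by
  simp [pd]

theorem pd_diff {F : Qt → ℝ} {q : Qt} (hF : ContDiffAt ℝ 2 F q) (v : Qt) :
    DifferentiableAt ℝ (fun y => pd v F y) q :=
  ((hF.fderiv_right (m := 1) (by norm_num)).clm_apply contDiffAt_const).differentiableAt
    (by norm_num)

theorem pd_cd {F : Qt → ℝ} {q : Qt} {m : WithTop ℕ∞} (hF : ContDiffAt ℝ (m + 1) F q) (v : Qt) :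
    ContDiffAt ℝ m (fun y => pd v F y) q :=
  (hF.fderiv_right (le_refl (m + 1))).clm_apply contDiffAt_const

set_option maxHeartbeats 4000000 in
/-- Total-energy balance of the modified weakly nonlinear
weakly dispersive (Boussinesq-type) model: if `(H, ū)` satisfies the mass
equation `H_t + div(H ū) = 0` and the momentum equation
`ū_t + (ū·∇)ū + ∇𝒫/(ρH) = p̌∇h/(ρH)` with the Boussinesq pressures `𝒫, p̌`,
then `(Hℰ)_t + div((Hℰ + 𝒫)ū) = −p̌ h_t`; in particular, over a steady bottom
this is a local conservation law. -/
theorem boussinesq_energy_balance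
    (ρ g : ℝ) (hρ : 0 < ρ)
    (D : Set (ℝ × ℝ)) (hD : IsOpen D)
    (I : Set ℝ) (hIopen : IsOpen I) (hIord : I.OrdConnected)
    (h η : Qt → ℝ) (u : Qt → ℝ × ℝ)
    (hh : ContDiffOn ℝ 3 h (D ×ˢ I)) (hη : ContDiffOn ℝ 3 η (D ×ˢ I))
    (hu : ContDiffOn ℝ 2 u (D ×ˢ I))
    (hHpos : ∀ q ∈ D ×ˢ I, 0 < h q + η q)
    -- mass equation `H_t + div(H ū) = 0`
    (hmass : ∀ q ∈ D ×ˢ I,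
      pT (fun z => h z + η z) q
        + pX1 (fun z => (h z + η z) * (u z).1) q
        + pX2 (fun z => (h z + η z) * (u z).2) q = 0)
    -- momentum equation with the Boussinesq pressures
    (hmom1 : ∀ q ∈ D ×ˢ I,
      matD u (fun z => (u z).1) q
        + pX1 (fun z => bousP ρ g h η u z) q / (ρ * (h q + η q)) =
        bousPc ρ g h η u q * pX1 h q / (ρ * (h q + η q)))
    (hmom2 : ∀ q ∈ D ×ˢ I,
      matD u (fun z => (u z).2) q
        + pX2 (fun z => bousP ρ g h η u z) q / (ρ * (h q + η q)) =
        bousPc ρ g h η u q * pX2 h q / (ρ * (h q + η q))) :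
    (∀ q ∈ D ×ˢ I,
      pT (fun z => (h z + η z) * bousE ρ g h η u z) q
        + pX1 (fun z =>
            ((h z + η z) * bousE ρ g h η u z + bousP ρ g h η u z) * (u z).1) q
        + pX2 (fun z =>
            ((h z + η z) * bousE ρ g h η u z + bousP ρ g h η u z) * (u z).2) q =
        -(bousPc ρ g h η u q * pT h q))
    ∧ ((∀ q ∈ D ×ˢ I, pT h q = 0) →
      ∀ q ∈ D ×ˢ I,
        pT (fun z => (h z + η z) * bousE ρ g h η u z) q
          + pX1 (fun z =>
              ((h z + η z) * bousE ρ g h η u z + bousP ρ g h η u z) * (u z).1) q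
          + pX2 (fun z =>
              ((h z + η z) * bousE ρ g h η u z + bousP ρ g h η u z) * (u z).2) q = 0) := by
  have hs : IsOpen (D ×ˢ I) := hD.prod hIopen
  have key : ∀ q ∈ D ×ˢ I,
      pT (fun z => (h z + η z) * bousE ρ g h η u z) q
        + pX1 (fun z =>
            ((h z + η z) * bousE ρ g h η u z + bousP ρ g h η u z) * (u z).1) q
        + pX2 (fun z =>
            ((h z + η z) * bousE ρ g h η u z + bousP ρ g h η u z) * (u z).2) q =
        -(bousPc ρ g h η u q * pT h q) := by
    intro q hq
    have hhA : ∀ z ∈ D ×ˢ I, ContDiffAt ℝ 3 h z := fun z hz => hh.contDiffAt (hs.mem_nhds hz)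
    have hηA : ∀ z ∈ D ×ˢ I, ContDiffAt ℝ 3 η z := fun z hz => hη.contDiffAt (hs.mem_nhds hz)
    have hu1A : ∀ z ∈ D ×ˢ I, ContDiffAt ℝ 2 (fun x => (u x).1) z :=
      fun z hz => (hu.contDiffAt (hs.mem_nhds hz)).fst
    have hu2A : ∀ z ∈ D ×ˢ I, ContDiffAt ℝ 2 (fun x => (u x).2) z :=
      fun z hz => (hu.contDiffAt (hs.mem_nhds hz)).snd
    have hdhA : ∀ v : Qt, ∀ z ∈ D ×ˢ I, ContDiffAt ℝ 2 (fun y => pd v h y) z :=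
      fun v z hz => pd_cd (m := 2) ((hhA z hz).of_le (by norm_num)) v
    have hdηA : ∀ v : Qt, ∀ z ∈ D ×ˢ I, ContDiffAt ℝ 2 (fun y => pd v η y) z :=
      fun v z hz => pd_cd (m := 2) ((hηA z hz).of_le (by norm_num)) v
    have hdu1A : ∀ v : Qt, ∀ z ∈ D ×ˢ I, ContDiffAt ℝ 1 (fun y => pd v (fun x => (u x).1) y) z :=
      fun v z hz => pd_cd (m := 1) ((hu1A z hz).of_le (by norm_num)) v
    have hdu2A : ∀ v : Qt, ∀ z ∈ D ×ˢ I, ContDiffAt ℝ 1 (fun y => pd v (fun x => (u x).2) y) z :=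
      fun v z hz => pd_cd (m := 1) ((hu2A z hz).of_le (by norm_num)) v
    have Dh' : ∀ z ∈ D ×ˢ I, DifferentiableAt ℝ h z :=
      fun z hz => (hhA z hz).differentiableAt (by norm_num)
    have Dη' : ∀ z ∈ D ×ˢ I, DifferentiableAt ℝ η z :=
      fun z hz => (hηA z hz).differentiableAt (by norm_num)
    have Du1' : ∀ z ∈ D ×ˢ I, DifferentiableAt ℝ (fun x => (u x).1) z :=
      fun z hz => (hu1A z hz).differentiableAt (by norm_num)
    have Du2' : ∀ z ∈ D ×ˢ I, DifferentiableAt ℝ (fun x => (u x).2) z :=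
      fun z hz => (hu2A z hz).differentiableAt (by norm_num)
    -- the mass equation lets us solve for the divergence of `u`
    have hdveq : ∀ y ∈ D ×ˢ I,
        pd v1 (fun x => (u x).1) y + pd v2 (fun x => (u x).2) y =
        -(pd vt h y + pd vt η y + (u y).1 * (pd v1 h y + pd v1 η y)
            + (u y).2 * (pd v2 h y + pd v2 η y)) / (h y + η y) := by
      intro y hy
      have h1 := Dh' y hy; have h2 := Dη' y hy
      have h3 := Du1' y hy; have h4 := Du2' y hy
      have hm := hmass y hy
      simp (disch := fun_prop) only [pT_eq, pX1_eq, pX2_eq, pd_add, pd_mul] at hm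
      rw [eq_div_iff (ne_of_gt (hHpos y hy))]
      linear_combination hm
    have hdvC : ∀ z ∈ D ×ˢ I, ContDiffAt ℝ 2
        (fun y => pd v1 (fun x => (u x).1) y + pd v2 (fun x => (u x).2) y) z := by
      intro z hz
      have hΦ : ContDiffAt ℝ 2 (fun y =>
          -(pd vt h y + pd vt η y + (u y).1 * (pd v1 h y + pd v1 η y)
            + (u y).2 * (pd v2 h y + pd v2 η y)) / (h y + η y)) z := by
        refine ContDiffAt.div ?_ (((hhA z hz).of_le (by norm_num)).add
          ((hηA z hz).of_le (by norm_num))) (ne_of_gt (hHpos z hz))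
        exact ((((hdhA vt z hz).add (hdηA vt z hz)).add
            ((hu1A z hz).mul ((hdhA v1 z hz).add (hdηA v1 z hz)))).add
            ((hu2A z hz).mul ((hdhA v2 z hz).add (hdηA v2 z hz)))).neg
      exact hΦ.congr_of_eventuallyEq
        (Filter.eventuallyEq_of_mem (hs.mem_nhds hz) fun y hy => hdveq y hy)
    have cdA : ContDiffAt ℝ 2
        (fun y => h y * (pd v1 (fun x => (u x).1) y + pd v2 (fun x => (u x).2) y)) q :=
      ((hhA q hq).of_le (by norm_num)).mul (hdvC q hq)
    have cdDh : ContDiffAt ℝ 2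
        (fun y => pd vt h y + (u y).1 * pd v1 h y + (u y).2 * pd v2 h y) q :=
      (((hdhA vt q hq).add ((hu1A q hq).mul (hdhA v1 q hq))).add
        ((hu2A q hq).mul (hdhA v2 q hq)))
    -- atom differentiability at `q`
    have a1 : DifferentiableAt ℝ h q := Dh' q hq
    have a2 : DifferentiableAt ℝ η q := Dη' q hq
    have a3 : DifferentiableAt ℝ (fun x => (u x).1) q := Du1' q hq
    have a4 : DifferentiableAt ℝ (fun x => (u x).2) q := Du2' q hq
    have b1 : DifferentiableAt ℝ (fun y => pd vt h y) q :=
      (hdhA vt q hq).differentiableAt (by norm_num)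
    have b2 : DifferentiableAt ℝ (fun y => pd v1 h y) q :=
      (hdhA v1 q hq).differentiableAt (by norm_num)
    have b3 : DifferentiableAt ℝ (fun y => pd v2 h y) q :=
      (hdhA v2 q hq).differentiableAt (by norm_num)
    have b4 : DifferentiableAt ℝ (fun y => pd vt η y) q :=
      (hdηA vt q hq).differentiableAt (by norm_num)
    have b5 : DifferentiableAt ℝ (fun y => pd v1 η y) q :=
      (hdηA v1 q hq).differentiableAt (by norm_num)
    have b6 : DifferentiableAt ℝ (fun y => pd v2 η y) q :=
      (hdηA v2 q hq).differentiableAt (by norm_num)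
    have c1 : DifferentiableAt ℝ (fun y => pd vt (fun x => (u x).1) y) q :=
      (hdu1A vt q hq).differentiableAt (by norm_num)
    have c2 : DifferentiableAt ℝ (fun y => pd v1 (fun x => (u x).1) y) q :=
      (hdu1A v1 q hq).differentiableAt (by norm_num)
    have c3 : DifferentiableAt ℝ (fun y => pd v2 (fun x => (u x).1) y) q :=
      (hdu1A v2 q hq).differentiableAt (by norm_num)
    have c4 : DifferentiableAt ℝ (fun y => pd vt (fun x => (u x).2) y) q :=
      (hdu2A vt q hq).differentiableAt (by norm_num)
    have c5 : DifferentiableAt ℝ (fun y => pd v1 (fun x => (u x).2) y) q :=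
      (hdu2A v1 q hq).differentiableAt (by norm_num)
    have c6 : DifferentiableAt ℝ (fun y => pd v2 (fun x => (u x).2) y) q :=
      (hdu2A v2 q hq).differentiableAt (by norm_num)
    have e1 : DifferentiableAt ℝ (fun y => pd vt
        (fun x => h x * (pd v1 (fun w => (u w).1) x + pd v2 (fun w => (u w).2) x)) y) q :=
      pd_diff cdA vt
    have e2 : DifferentiableAt ℝ (fun y => pd v1
        (fun x => h x * (pd v1 (fun w => (u w).1) x + pd v2 (fun w => (u w).2) x)) y) q :=
      pd_diff cdA v1
    have e3 : DifferentiableAt ℝ (fun y => pd v2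
        (fun x => h x * (pd v1 (fun w => (u w).1) x + pd v2 (fun w => (u w).2) x)) y) q :=
      pd_diff cdA v2
    have f1 : DifferentiableAt ℝ (fun y => pd vt
        (fun x => pd vt h x + (u x).1 * pd v1 h x + (u x).2 * pd v2 h x) y) q :=
      pd_diff cdDh vt
    have f2 : DifferentiableAt ℝ (fun y => pd v1
        (fun x => pd vt h x + (u x).1 * pd v1 h x + (u x).2 * pd v2 h x) y) q :=
      pd_diff cdDh v1
    have f3 : DifferentiableAt ℝ (fun y => pd v2
        (fun x => pd vt h x + (u x).1 * pd v1 h x + (u x).2 * pd v2 h x) y) q :=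
      pd_diff cdDh v2
    -- clear denominators in the momentum equations
    have hHne : ρ * (h q + η q) ≠ 0 := ne_of_gt (mul_pos hρ (hHpos q hq))
    have hm1' : ρ * (h q + η q) * matD u (fun z => (u z).1) q
        + pX1 (fun z => bousP ρ g h η u z) q = bousPc ρ g h η u q * pX1 h q := by
      have hx := hmom1 q hq
      field_simp [ne_of_gt (hHpos q hq)] at hx
      linear_combination hx
    have hm2' : ρ * (h q + η q) * matD u (fun z => (u z).2) q
        + pX2 (fun z => bousP ρ g h η u z) q = bousPc ρ g h η u q * pX2 h q := by
      have hx := hmom2 q hq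
      field_simp [ne_of_gt (hHpos q hq)] at hx
      linear_combination hx
    have hm := hmass q hq
    simp (disch := fun_prop) only [pT_eq, pX1_eq, pX2_eq, bousE, bousP, bousPc, matD, divV,
      div_eq_mul_inv, pow_two, pd_add, pd_sub, pd_mul, pd_const] at hm hm1' hm2' ⊢
    linear_combination
      (ρ * (((u q).1 * (u q).1 + (u q).2 * (u q).2) / 2
          + h q * h q / 6 * ((pd v1 (fun x => (u x).1) q + pd v2 (fun x => (u x).2) q)
              * (pd v1 (fun x => (u x).1) q + pd v2 (fun x => (u x).2) q))
          + h q / 2 * (pd v1 (fun x => (u x).1) q + pd v2 (fun x => (u x).2) q)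
              * (pd vt h q + (u q).1 * pd v1 h q + (u q).2 * pd v2 h q)
          + (pd vt h q + (u q).1 * pd v1 h q + (u q).2 * pd v2 h q)
              * (pd vt h q + (u q).1 * pd v1 h q + (u q).2 * pd v2 h q) / 2
          + g * ((h q + η q) - 2 * h q) / 2)
        + ρ * g * (h q + η q) / 2) * hm
      + (u q).1 * hm1' + (u q).2 * hm2'
  refine ⟨key, fun hflat q hq => ?_⟩
  have h0 := key q hq
  rw [hflat q hq, mul_zero, neg_zero] at h0
  exact h0

end
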